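/- If δ ≥ 7, the sequence S_R of boundary sizes of balls in the δ-regular plane triangulation grows exponentially: there exist c > 1 and a > 0 with S_R ≥ a·c^R for all R ≥ 1. -/
import Mathlib


/-- The pair `(V_R, S_R)` of the volume and boundary size of the ball of
radius `R` in the `δ`-regular plane triangulation, defined by the recursions
`V_0 = S_0 = 1`, `S_{R+1} = S_R + 6 + (δ - 6) V_R`, `V_{R+1} = V_R + S_{R+1}`. -/
def ballVS (δ : ℕ) : ℕ → ℕ × ℕ
  | 0 => (1, 1)
  | R + 1 =>
    let p := ballVS δ R
    let S' := p.2 + 6 + (δ - 6) * p.1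
    (p.1 + S', S')

/-- `V_R`, the volume of the ball of radius `R` in the `δ`-regular
triangulation. -/
def ballV (δ R : ℕ) : ℕ := (ballVS δ R).1

/-- `S_R`, the boundary size of the ball of radius `R` in the `δ`-regular
triangulation. -/
def ballS (δ R : ℕ) : ℕ := (ballVS δ R).2

lemma ballV_ge_ballS (δ R : ℕ) : ballS δ R ≤ ballV δ R := by
  induction R with
  | zero => simp [ballV, ballS, ballVS]
  | succ n ih =>
    simp only [ballV, ballS, ballVS]
    omega

lemma ballS_double (δ : ℕ) (hδ : 7 ≤ δ) (R : ℕ) :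
    2 * ballS δ R ≤ ballS δ (R + 1) := by
  have h := ballV_ge_ballS δ R
  have h2 : (ballVS δ R).1 ≤ (δ - 6) * (ballVS δ R).1 :=
    Nat.le_mul_of_pos_left _ (by omega)
  have e : ballS δ (R + 1) = ballS δ R + 6 + (δ - 6) * (ballVS δ R).1 := rfl
  unfold ballV ballS at *
  omega

lemma ballS_ge_pow (δ : ℕ) (hδ : 7 ≤ δ) : ∀ R, 1 ≤ R → 2 ^ R ≤ ballS δ R := by
  intro R hR
  induction R with
  | zero => omega
  | succ n ih =>
    rcases Nat.eq_or_lt_of_le hR with h | h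
    · obtain rfl : n = 0 := by omega
      have : ballS δ (0 + 1) = 1 + 6 + (δ - 6) * 1 := by simp [ballS, ballVS]
      omega
    · have hn : 1 ≤ n := by omega
      have := ballS_double δ hδ n
      have := ih hn
      have : 2 ^ (n + 1) = 2 * 2 ^ n := by ring
      omega

theorem hyperbolic_ball_exponential_growth (δ : ℕ) (hδ : 7 ≤ δ) :
    ∃ c : ℝ, 1 < c ∧ ∃ a : ℝ, 0 < a ∧
      ∀ R : ℕ, 1 ≤ R → (ballS δ R : ℝ) ≥ a * c ^ R := by
  refine ⟨2, by norm_num, 1, by norm_num, fun R hR => ?_⟩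
  have h := ballS_ge_pow δ hδ R hR
  have : ((2 : ℕ) ^ R : ℝ) ≤ (ballS δ R : ℝ) := by exact_mod_cast h
  push_cast at this
  linarith
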